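/- Let X be a zero-dimensional scheme of degree d with two embeddings X ⊆ P^N and X ⊆ P^{N'}. Then h^0(X, N_{X|P^N}) - dN = h^0(X, N_{X|P^{N'}}) - dN', where N_{X|P^M} denotes the normal sheaf of the respective embedding. -/

import Mathlib

set_option synthInstance.maxHeartbeats 1000000
set_option maxHeartbeats 1000000

open MvPolynomial

/-- The conormal module `I/I²`. -/
noncomputable abbrev conormalMod {S : Type*} [CommRing S] (I : Ideal S) :=
  (I : Submodule S S) ⧸ (Submodule.comap (I : Submodule S S).subtype
    ((I ^ 2 : Ideal S) : Submodule S S))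

namespace Stmt13Aux

lemma smul_mk' {R : Type*} [CommRing R] (J : Ideal R) (r : R) (w : R ⧸ J) :
    r • w = Ideal.Quotient.mk J r * w := by
  obtain ⟨s, rfl⟩ := Ideal.Quotient.mk_surjective w
  rw [← map_mul, show r * s = r • s from rfl]
  exact (Submodule.Quotient.mk_smul J r s).symm

lemma apply_eq_zero_of_mem_mul {R : Type*} [CommRing R] {J : Ideal R}
    (f : (J : Submodule R R) →ₗ[R] R ⧸ J) {x : R} (hx2 : x ∈ J * J) (hx : x ∈ J) :
    f ⟨x, hx⟩ = 0 := by
  have key : ∀ y (hy : y ∈ J * J), f ⟨y, Ideal.mul_le_right hy⟩ = 0 := by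
    intro y hy
    refine Submodule.mul_induction_on' (C := fun y hy => f ⟨y, Ideal.mul_le_right hy⟩ = 0)
      ?_ ?_ hy
    · intro a ha b hb
      have h : (⟨a * b, Ideal.mul_le_right (Submodule.mul_mem_mul ha hb)⟩ : J)
          = a • (⟨b, hb⟩ : J) := rfl
      rw [h, map_smul, smul_mk', Ideal.Quotient.eq_zero_iff_mem.mpr ha, zero_mul]
    · intro x hxm y hym ihx ihy
      have h : (⟨x + y, Ideal.mul_le_right (add_mem hxm hym)⟩ : J)
          = ⟨x, Ideal.mul_le_right hxm⟩ + ⟨y, Ideal.mul_le_right hym⟩ := rfl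
      rw [h, map_add, ihx, ihy, add_zero]
  exact key x hx2



variable {k : Type*} [CommRing k]

noncomputable def conormalHomEquiv {S : Type*} [CommRing S] [Algebra k S] (I : Ideal S) :
    (conormalMod I →ₗ[S] S ⧸ I) ≃ₗ[k] ((I : Submodule S S) →ₗ[S] S ⧸ I) := by
  refine LinearEquiv.ofLinear
    ⟨⟨fun f => f ∘ₗ Submodule.mkQ _, fun f g => ?_⟩, fun c f => ?_⟩
    ⟨⟨fun u => Submodule.liftQ _ u ?_, fun u v => ?_⟩, fun c u => ?_⟩ ?_ ?_
  · exact LinearMap.ext fun x => rfl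
  · exact LinearMap.ext fun x => rfl
  · intro x hx
    have hx2 : (x : S) ∈ I * I := by
      have : (x : S) ∈ (I ^ 2 : Ideal S) := hx
      rwa [pow_two] at this
    show u x = 0
    have : u x = u ⟨(x : S), x.2⟩ := by congr
    rw [this]
    exact apply_eq_zero_of_mem_mul u hx2 x.2
  · apply LinearMap.ext; intro y
    obtain ⟨x, rfl⟩ := Submodule.mkQ_surjective _ y
    simp
  · apply LinearMap.ext; intro y
    obtain ⟨x, rfl⟩ := Submodule.mkQ_surjective _ y
    simp
  · apply LinearMap.ext; intro u
    apply LinearMap.ext; intro x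
    simp
  · apply LinearMap.ext; intro f
    apply LinearMap.ext; intro y
    obtain ⟨x, rfl⟩ := Submodule.mkQ_surjective _ y
    simp

lemma fd_hom {k : Type*} [Field k] {S : Type*} [CommRing S] [Algebra k S] [IsNoetherianRing S] (I : Ideal S)
    [Module.Finite k (S ⧸ I)] :
    Module.Finite k ((I : Submodule S S) →ₗ[S] S ⧸ I) := by
  have hfin : Module.Finite S I := ⟨(Submodule.fg_top _).mpr (IsNoetherian.noetherian (I : Submodule S S))⟩
  obtain ⟨n, s, hs⟩ := Module.Finite.exists_fin (R := S) (M := I)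
  let Φ : ((I : Submodule S S) →ₗ[S] S ⧸ I) →ₗ[k] (Fin n → S ⧸ I) :=
    ⟨⟨fun f => fun i => f (s i), fun f g => rfl⟩, fun c f => rfl⟩
  have hinj : Function.Injective Φ := by
    intro f g hfg
    have h : ∀ i, f (s i) = g (s i) := fun i => congrFun hfg i
    have : ∀ x ∈ Submodule.span S (Set.range s), f x = g x := by
      intro x hx
      induction hx using Submodule.span_induction with
      | mem x hx => obtain ⟨i, rfl⟩ := hx; exact h i
      | zero => simp
      | add x y _ _ ihx ihy => simp [map_add, ihx, ihy]
      | smul c x _ ih => simp [map_smul, ih]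
    apply LinearMap.ext; intro x
    exact this x (hs ▸ Submodule.mem_top)
  exact Module.Finite.of_injective Φ hinj




section Key

variable {k S : Type*} [CommRing k] [CommRing S] [Algebra k S] (I : Ideal S) {m : ℕ}
  (g : Fin m → S)

/-- K, the pulled back ideal -/
noncomputable abbrev Kdl : Ideal (MvPolynomial (Fin m) S) := I.comap (aeval g)

lemma mem_Kdl (p : MvPolynomial (Fin m) S) : p ∈ Kdl I g ↔ aeval g p ∈ I := Iff.rfl

lemma C_mem_Kdl {x : S} (hx : x ∈ I) : C x ∈ Kdl I g := by
  simp [mem_Kdl, hx]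

lemma Xg_mem_Kdl (j : Fin m) : X j - C (g j) ∈ Kdl I g := by
  simp [mem_Kdl]

noncomputable def θf : (MvPolynomial (Fin m) S ⧸ Kdl I g) →+* S ⧸ I :=
  Ideal.Quotient.lift _ ((Ideal.Quotient.mk I).comp (aeval g : MvPolynomial (Fin m) S →ₐ[S] S).toRingHom)
    (fun a ha => by
      simpa [Ideal.Quotient.eq_zero_iff_mem] using ha)

noncomputable def θb : S ⧸ I →+* MvPolynomial (Fin m) S ⧸ Kdl I g :=
  Ideal.Quotient.lift I ((Ideal.Quotient.mk _).comp (C : S →+* MvPolynomial (Fin m) S))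
    (fun a ha => by
      simp only [RingHom.comp_apply, Ideal.Quotient.eq_zero_iff_mem]
      exact C_mem_Kdl I g ha)

@[simp] lemma θf_mk (t : MvPolynomial (Fin m) S) :
    θf I g (Ideal.Quotient.mk _ t) = Ideal.Quotient.mk I (aeval g t) :=
  Ideal.Quotient.lift_mk _ _ _

@[simp] lemma θb_mk (s : S) :
    θb I g (Ideal.Quotient.mk I s) = Ideal.Quotient.mk _ (C s) :=
  Ideal.Quotient.lift_mk _ _ _

@[simp] lemma θb_θf (w) : θb I g (θf I g w) = w := by
  obtain ⟨t, rfl⟩ := Ideal.Quotient.mk_surjective w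
  rw [θf_mk, θb_mk, Ideal.Quotient.mk_eq_mk_iff_sub_mem, mem_Kdl, map_sub, aeval_C,
    Algebra.algebraMap_self_apply, sub_self]
  exact I.zero_mem

@[simp] lemma θf_θb (w) : θf I g (θb I g w) = w := by
  obtain ⟨s, rfl⟩ := Ideal.Quotient.mk_surjective w
  simp

lemma θf_smul (c : k) (w) : θf I g (c • w) = c • θf I g w := by
  obtain ⟨t, rfl⟩ := Ideal.Quotient.mk_surjective w
  have h1 : c • (Ideal.Quotient.mk (Kdl I g) t) = Ideal.Quotient.mk (Kdl I g) (c • t) :=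
    (Submodule.Quotient.mk_smul _ c t).symm
  have h2 : c • (Ideal.Quotient.mk I (aeval g t)) = Ideal.Quotient.mk I (c • aeval g t) :=
    (Submodule.Quotient.mk_smul _ c _).symm
  rw [h1, θf_mk, θf_mk, h2]
  congr 1
  rw [Algebra.smul_def, Algebra.smul_def, map_mul]
  congr 1
  rw [IsScalarTower.algebraMap_apply k S (MvPolynomial (Fin m) S), algebraMap_eq, aeval_C,
    Algebra.algebraMap_self_apply]

lemma θb_smul (c : k) (w) : θb I g (c • w) = c • θb I g w := by
  obtain ⟨s, rfl⟩ := Ideal.Quotient.mk_surjective w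
  have h1 : c • (Ideal.Quotient.mk I s) = Ideal.Quotient.mk I (c • s) :=
    (Submodule.Quotient.mk_smul _ c s).symm
  have h2 : c • (Ideal.Quotient.mk (Kdl I g) (C s)) = Ideal.Quotient.mk (Kdl I g) (c • C s) :=
    (Submodule.Quotient.mk_smul _ c _).symm
  rw [h1, θb_mk, θb_mk, h2]
  congr 1
  rw [Algebra.smul_def, Algebra.smul_def,
    IsScalarTower.algebraMap_apply k S (MvPolynomial (Fin m) S), algebraMap_eq, map_mul]

lemma taylor_mem (p : MvPolynomial (Fin m) S) :
    p - C (aeval g p) - ∑ j, C (aeval g (pderiv j p)) * (X j - C (g j)) ∈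
      (Ideal.span (Set.range fun j : Fin m => X j - C (g j))) *
      (Ideal.span (Set.range fun j : Fin m => X j - C (g j))) := by
  classical
  induction p using MvPolynomial.induction_on with
  | C a => simp [pderiv_C]
  | add p q hp hq =>
      have := add_mem hp hq
      convert this using 1
      simp only [map_add, add_mul, Finset.sum_add_distrib]
      ring
  | mul_X p i hp =>
      have h1 : ∀ j : Fin m, aeval g (pderiv j (p * X i)) =
          aeval g (pderiv j p) * g i + (if i = j then aeval g p else 0) := by
        intro j
        rw [pderiv_mul, pderiv_X]
        simp [Pi.single_apply, apply_ite (aeval g), apply_ite (eval g), mul_ite]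
      have h2 : ∑ j, C (aeval g (pderiv j (p * X i))) * (X j - C (g j)) =
          C (g i) * ∑ j, C (aeval g (pderiv j p)) * (X j - C (g j)) +
            C (aeval g p) * (X i - C (g i)) := by
        simp only [h1, map_add, map_mul, add_mul, Finset.sum_add_distrib]
        congr 1
        · rw [Finset.mul_sum]
          apply Finset.sum_congr rfl
          intros; ring
        · simp only [apply_ite C, map_zero, ite_mul, zero_mul]
          rw [Finset.sum_ite_eq]
          simp
      have key : p * X i - C (aeval g (p * X i)) -
            ∑ j, C (aeval g (pderiv j (p * X i))) * (X j - C (g j)) =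
          X i * (p - C (aeval g p) - ∑ j, C (aeval g (pderiv j p)) * (X j - C (g j))) +
            (X i - C (g i)) * ∑ j, C (aeval g (pderiv j p)) * (X j - C (g j)) := by
        rw [h2, map_mul, aeval_X, map_mul]
        ring
      rw [key]
      refine add_mem (Ideal.mul_mem_left _ _ hp) (Submodule.mul_mem_mul
        (Ideal.subset_span ⟨i, rfl⟩) (Ideal.sum_mem _ fun j _ =>
          Ideal.mul_mem_left _ _ (Ideal.subset_span ⟨j, rfl⟩)))

lemma span_le_Kdl :
    Ideal.span (Set.range fun j : Fin m => X j - C (g j)) ≤ Kdl I g := by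
  rw [Ideal.span_le]
  rintro _ ⟨j, rfl⟩
  exact Xg_mem_Kdl I g j

lemma repr_lemma
    (f : (Kdl I g : Submodule (MvPolynomial (Fin m) S) (MvPolynomial (Fin m) S))
      →ₗ[MvPolynomial (Fin m) S] MvPolynomial (Fin m) S ⧸ Kdl I g)
    (p : MvPolynomial (Fin m) S) (hp : p ∈ Kdl I g) :
    f ⟨p, hp⟩ = f ⟨C (aeval g p), C_mem_Kdl I g hp⟩ +
      ∑ j, Ideal.Quotient.mk _ (C (aeval g (pderiv j p))) * f ⟨X j - C (g j), Xg_mem_Kdl I g j⟩ := by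
  classical
  set q : MvPolynomial (Fin m) S :=
    C (aeval g p) + ∑ j, C (aeval g (pderiv j p)) * (X j - C (g j)) with hq
  have hqmem : q ∈ Kdl I g :=
    add_mem (C_mem_Kdl I g hp) (Ideal.sum_mem _ fun j _ =>
      Ideal.mul_mem_left _ _ (Xg_mem_Kdl I g j))
  have hpq : p - q = p - C (aeval g p) - ∑ j, C (aeval g (pderiv j p)) * (X j - C (g j)) := by
    rw [hq]; ring
  have hr : p - q ∈ Kdl I g * Kdl I g := by
    have hr0 := taylor_mem g p
    rw [← hpq] at hr0
    exact Ideal.mul_mono (span_le_Kdl I g) (span_le_Kdl I g) hr0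
  have hsplit : (⟨p, hp⟩ : (Kdl I g : Submodule _ _)) = ⟨q, hqmem⟩ + ⟨p - q, sub_mem hp hqmem⟩ := by
    apply Subtype.ext
    simp
  rw [hsplit, map_add, apply_eq_zero_of_mem_mul f hr (sub_mem hp hqmem), add_zero]
  have hsum : (⟨q, hqmem⟩ : (Kdl I g : Submodule _ _)) =
      ⟨C (aeval g p), C_mem_Kdl I g hp⟩ +
      ∑ j : Fin m, (C (aeval g (pderiv j p)) : MvPolynomial (Fin m) S) • (⟨X j - C (g j), Xg_mem_Kdl I g j⟩ : (Kdl I g : Submodule _ _)) := by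
    apply Subtype.ext
    simp only [hq, Submodule.coe_add, Submodule.coe_sum, SetLike.val_smul, smul_eq_mul]
  rw [hsum, map_add, map_sum]
  congr 1
  refine Finset.sum_congr rfl fun j _ => ?_
  rw [map_smul, smul_mk']


variable {I} {g}

local notation "T" => MvPolynomial (Fin m) S

noncomputable def Fcomp1
    (f : (Kdl I g : Submodule (MvPolynomial (Fin m) S) (MvPolynomial (Fin m) S))
      →ₗ[MvPolynomial (Fin m) S] MvPolynomial (Fin m) S ⧸ Kdl I g) :
    (I : Submodule S S) →ₗ[S] S ⧸ I where
  toFun x := θf I g (f ⟨C (x : S), C_mem_Kdl I g x.2⟩)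
  map_add' x y := by
    have h : (⟨C ((x + y : (I : Submodule S S)) : S), C_mem_Kdl I g (x + y).2⟩ :
        (Kdl I g : Submodule T T)) =
        ⟨C (x : S), C_mem_Kdl I g x.2⟩ + ⟨C (y : S), C_mem_Kdl I g y.2⟩ := by
      apply Subtype.ext
      simp
    show θf I g (f ⟨C ((x + y : (I : Submodule S S)) : S), C_mem_Kdl I g (x + y).2⟩) =
      θf I g (f ⟨C (x : S), C_mem_Kdl I g x.2⟩) + θf I g (f ⟨C (y : S), C_mem_Kdl I g y.2⟩)
    rw [h, map_add, map_add]
  map_smul' s x := by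
    have h : (⟨C ((s • x : (I : Submodule S S)) : S), C_mem_Kdl I g (s • x).2⟩ :
        (Kdl I g : Submodule T T)) =
        (C s : MvPolynomial (Fin m) S) • ⟨C (x : S), C_mem_Kdl I g x.2⟩ := by
      apply Subtype.ext
      simp
    show θf I g (f ⟨C ((s • x : (I : Submodule S S)) : S), C_mem_Kdl I g (s • x).2⟩) =
      s • θf I g (f ⟨C (x : S), C_mem_Kdl I g x.2⟩)
    rw [h, map_smul, smul_mk', map_mul, θf_mk]
    rw [aeval_C, Algebra.algebraMap_self_apply, smul_mk']

noncomputable def Fmap :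
    ((Kdl I g : Submodule (MvPolynomial (Fin m) S) (MvPolynomial (Fin m) S))
      →ₗ[MvPolynomial (Fin m) S] MvPolynomial (Fin m) S ⧸ Kdl I g) →ₗ[k]
    (((I : Submodule S S) →ₗ[S] S ⧸ I) × (Fin m → S ⧸ I)) where
  toFun f := (Fcomp1 f, fun j => θf I g (f ⟨X j - C (g j), Xg_mem_Kdl I g j⟩))
  map_add' f₁ f₂ := by
    refine Prod.ext ?_ ?_
    · apply LinearMap.ext; intro x
      show θf I g ((f₁ + f₂) _) = _
      rw [LinearMap.add_apply, map_add]
      rfl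
    · funext j
      show θf I g ((f₁ + f₂) _) = _
      rw [LinearMap.add_apply, map_add]
      rfl
  map_smul' c f := by
    refine Prod.ext ?_ ?_
    · apply LinearMap.ext; intro x
      show θf I g ((c • f) _) = _
      rw [LinearMap.smul_apply, θf_smul]
      rfl
    · funext j
      show θf I g ((c • f) _) = _
      rw [LinearMap.smul_apply, θf_smul]
      rfl

noncomputable def Gcomp
    (ua : ((I : Submodule S S) →ₗ[S] S ⧸ I) × (Fin m → S ⧸ I)) :
    (Kdl I g : Submodule (MvPolynomial (Fin m) S) (MvPolynomial (Fin m) S))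
      →ₗ[MvPolynomial (Fin m) S] MvPolynomial (Fin m) S ⧸ Kdl I g where
  toFun p := θb I g (ua.1 ⟨aeval g (p : MvPolynomial (Fin m) S), p.2⟩ +
    ∑ j : Fin m, Ideal.Quotient.mk I (aeval g (pderiv j (p : MvPolynomial (Fin m) S))) * ua.2 j)
  map_add' p q := by
    have h : (⟨aeval g ((p + q : (Kdl I g : Submodule T T)) : T), (p + q).2⟩ :
        (I : Submodule S S)) = ⟨aeval g (p : T), p.2⟩ + ⟨aeval g (q : T), q.2⟩ := by
      apply Subtype.ext
      simp
    show θb I g (ua.1 ⟨aeval g ((p + q : (Kdl I g : Submodule T T)) : T), (p + q).2⟩ +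
        ∑ j : Fin m, Ideal.Quotient.mk I
          (aeval g (pderiv j ((p + q : (Kdl I g : Submodule T T)) : T))) * ua.2 j) =
      θb I g (ua.1 ⟨aeval g (p : T), p.2⟩ +
        ∑ j : Fin m, Ideal.Quotient.mk I (aeval g (pderiv j (p : T))) * ua.2 j) +
      θb I g (ua.1 ⟨aeval g (q : T), q.2⟩ +
        ∑ j : Fin m, Ideal.Quotient.mk I (aeval g (pderiv j (q : T))) * ua.2 j)
    rw [h, map_add, ← map_add (θb I g)]
    congr 1
    have hc : ((p + q : (Kdl I g : Submodule T T)) : T) = (p : T) + (q : T) := rfl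
    simp only [hc, map_add, add_mul, Finset.sum_add_distrib]
    abel
  map_smul' t p := by
    classical
    have hmem : aeval g (p : T) ∈ I := p.2
    have h0 : Ideal.Quotient.mk I (aeval g (p : T)) = 0 :=
      Ideal.Quotient.eq_zero_iff_mem.mpr hmem
    have hc : ((t • p : (Kdl I g : Submodule T T)) : T) = t * (p : T) := rfl
    have hu : (⟨aeval g ((t • p : (Kdl I g : Submodule T T)) : T), (t • p).2⟩ :
        (I : Submodule S S)) = aeval g t • ⟨aeval g (p : T), hmem⟩ := by
      apply Subtype.ext
      simp [hc]
    have hsum : ∀ j : Fin m,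
        Ideal.Quotient.mk I (aeval g (pderiv j ((t • p : (Kdl I g : Submodule T T)) : T)))
            * ua.2 j =
          Ideal.Quotient.mk I (aeval g t) *
            (Ideal.Quotient.mk I (aeval g (pderiv j (p : T))) * ua.2 j) := by
      intro j
      rw [hc, pderiv_mul, map_add, map_add, map_mul, map_mul, map_mul, map_mul, h0, add_mul]
      ring
    show θb I g (ua.1 ⟨aeval g ((t • p : (Kdl I g : Submodule T T)) : T), (t • p).2⟩ +
        ∑ j : Fin m, Ideal.Quotient.mk I
          (aeval g (pderiv j ((t • p : (Kdl I g : Submodule T T)) : T))) * ua.2 j) =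
      t • θb I g (ua.1 ⟨aeval g (p : T), p.2⟩ +
        ∑ j : Fin m, Ideal.Quotient.mk I (aeval g (pderiv j (p : T))) * ua.2 j)
    have hp2 : (⟨aeval g (p : T), (p : (Kdl I g : Submodule T T)).2⟩ : (I : Submodule S S)) =
        ⟨aeval g (p : T), hmem⟩ := rfl
    rw [hu, map_smul, smul_mk']
    simp only [hsum]
    rw [← Finset.mul_sum, ← mul_add, map_mul (θb I g), θb_mk, smul_mk' (Kdl I g) t, hp2]
    congr 1
    rw [Ideal.Quotient.mk_eq_mk_iff_sub_mem, mem_Kdl, map_sub, aeval_C, Algebra.algebraMap_self_apply,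
      sub_self]
    exact I.zero_mem



noncomputable def Gmap :
    (((I : Submodule S S) →ₗ[S] S ⧸ I) × (Fin m → S ⧸ I)) →ₗ[k]
    ((Kdl I g : Submodule (MvPolynomial (Fin m) S) (MvPolynomial (Fin m) S))
      →ₗ[MvPolynomial (Fin m) S] MvPolynomial (Fin m) S ⧸ Kdl I g) where
  toFun := Gcomp
  map_add' ua vb := by
    apply LinearMap.ext; intro p
    show θb I g _ = θb I g _ + θb I g _
    rw [← map_add (θb I g)]
    congr 1
    show (ua.1 + vb.1) _ + ∑ j : Fin m, _ * (ua.2 + vb.2) j = _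
    rw [LinearMap.add_apply]
    simp only [Pi.add_apply, mul_add, Finset.sum_add_distrib]
    abel
  map_smul' c ua := by
    apply LinearMap.ext; intro p
    show θb I g _ = c • θb I g _
    rw [← θb_smul]
    congr 1
    show (c • ua.1) _ + ∑ j : Fin m, _ * (c • ua.2) j = _
    rw [LinearMap.smul_apply]
    simp only [Pi.smul_apply, smul_add, Finset.smul_sum]
    congr 1
    refine Finset.sum_congr rfl fun j _ => ?_
    rw [mul_smul_comm]

noncomputable def keyEquiv :
    ((Kdl I g : Submodule (MvPolynomial (Fin m) S) (MvPolynomial (Fin m) S))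
      →ₗ[MvPolynomial (Fin m) S] MvPolynomial (Fin m) S ⧸ Kdl I g) ≃ₗ[k]
    (((I : Submodule S S) →ₗ[S] S ⧸ I) × (Fin m → S ⧸ I)) := by
  refine LinearEquiv.ofLinear (Fmap (k := k)) (Gmap (k := k)) ?_ ?_
  · -- Fmap ∘ Gmap = id
    apply LinearMap.ext; intro ua
    refine Prod.ext ?_ ?_
    · apply LinearMap.ext; intro x
      show θf I g (Gcomp ua ⟨C (x : S), C_mem_Kdl I g x.2⟩) = ua.1 x
      show θf I g (θb I g _) = ua.1 x
      rw [θf_θb]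
      have hps : ∀ j : Fin m, pderiv j (C (x : S) : MvPolynomial (Fin m) S) = 0 :=
        fun j => pderiv_C
      simp only [hps, map_zero, zero_mul, Finset.sum_const_zero, add_zero]
      have h : (⟨aeval g (C (x : S) : MvPolynomial (Fin m) S), (C_mem_Kdl I g x.2 :
          C (x : S) ∈ Kdl I g)⟩ : (I : Submodule S S)) = x := by
        apply Subtype.ext
        simp [aeval_C]
      rw [h]
    · funext j
      show θf I g (Gcomp ua ⟨X j - C (g j), Xg_mem_Kdl I g j⟩) = ua.2 j
      show θf I g (θb I g _) = ua.2 j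
      rw [θf_θb]
      have h : (⟨aeval g ((X j - C (g j)) : MvPolynomial (Fin m) S), (Xg_mem_Kdl I g j :
          X j - C (g j) ∈ Kdl I g)⟩ : (I : Submodule S S)) = 0 := by
        apply Subtype.ext
        simp [aeval_C]
      rw [h, map_zero, zero_add]
      classical
      have h2 : ∀ i : Fin m, Ideal.Quotient.mk I
            (aeval g (pderiv i ((X j - C (g j)) : MvPolynomial (Fin m) S))) * ua.2 i =
          if j = i then ua.2 i else 0 := by
        intro i
        rw [map_sub, pderiv_X, pderiv_C, sub_zero]
        by_cases hij : j = i
        · subst hij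
          simp
        · simp [Pi.single_apply, hij]
      simp only [h2]
      rw [Finset.sum_ite_eq]
      simp
  · -- Gmap ∘ Fmap = id
    apply LinearMap.ext; intro f
    apply LinearMap.ext; intro p
    show θb I g (Fcomp1 f ⟨aeval g (p : MvPolynomial (Fin m) S), p.2⟩ +
      ∑ j : Fin m, Ideal.Quotient.mk I (aeval g (pderiv j (p : MvPolynomial (Fin m) S))) *
        θf I g (f ⟨X j - C (g j), Xg_mem_Kdl I g j⟩)) = f p
    show θb I g (θf I g (f ⟨C (aeval g (p : MvPolynomial (Fin m) S)), _⟩) +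
      ∑ j : Fin m, Ideal.Quotient.mk I (aeval g (pderiv j (p : MvPolynomial (Fin m) S))) *
        θf I g (f ⟨X j - C (g j), Xg_mem_Kdl I g j⟩)) = f p
    have hmul : ∀ j : Fin m, Ideal.Quotient.mk I
          (aeval g (pderiv j (p : MvPolynomial (Fin m) S))) *
          θf I g (f ⟨X j - C (g j), Xg_mem_Kdl I g j⟩) =
        θf I g (Ideal.Quotient.mk (Kdl I g) (C (aeval g (pderiv j (p : MvPolynomial (Fin m) S)))) *
          f ⟨X j - C (g j), Xg_mem_Kdl I g j⟩) := by
      intro j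
      rw [map_mul (θf I g), θf_mk, aeval_C, Algebra.algebraMap_self_apply]
    simp only [hmul]
    rw [← map_sum (θf I g), ← map_add (θf I g), θb_θf]
    have hrepr := repr_lemma I g f (p : MvPolynomial (Fin m) S) p.2
    have hp : (⟨(p : MvPolynomial (Fin m) S), p.2⟩ : (Kdl I g : Submodule _ _)) = p := rfl
    rw [hp] at hrepr
    exact hrepr.symm

end Key



section Congr
variable {k : Type*} [CommRing k] {R R' : Type*} [CommRing R] [CommRing R']
  [Algebra k R] [Algebra k R']
  (σ : R ≃ₐ[k] R') (J : Ideal R) (J' : Ideal R') (hJ : ∀ x, x ∈ J ↔ σ x ∈ J')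

noncomputable def qmap : R ⧸ J →+* R' ⧸ J' :=
  Ideal.Quotient.lift J ((Ideal.Quotient.mk J').comp (σ : R ≃+* R').toRingHom)
    (fun a ha => by
      simp only [RingHom.comp_apply]
      exact Ideal.Quotient.eq_zero_iff_mem.mpr ((hJ a).mp ha))

noncomputable def qmapInv : R' ⧸ J' →+* R ⧸ J :=
  Ideal.Quotient.lift J' ((Ideal.Quotient.mk J).comp (σ.symm : R' ≃+* R).toRingHom)
    (fun a ha => by
      simp only [RingHom.comp_apply]
      refine Ideal.Quotient.eq_zero_iff_mem.mpr ((hJ _).mpr ?_)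
      show σ (σ.symm a) ∈ J'
      rw [AlgEquiv.apply_symm_apply]
      exact ha)

@[simp] lemma qmap_mk (x : R) :
    qmap σ J J' hJ (Ideal.Quotient.mk J x) = Ideal.Quotient.mk J' (σ x) :=
  Ideal.Quotient.lift_mk _ _ _

@[simp] lemma qmapInv_mk (y : R') :
    qmapInv σ J J' hJ (Ideal.Quotient.mk J' y) = Ideal.Quotient.mk J (σ.symm y) :=
  Ideal.Quotient.lift_mk _ _ _

@[simp] lemma qmapInv_qmap (w : R ⧸ J) : qmapInv σ J J' hJ (qmap σ J J' hJ w) = w := by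
  obtain ⟨x, rfl⟩ := Ideal.Quotient.mk_surjective w
  simp

@[simp] lemma qmap_qmapInv (w : R' ⧸ J') : qmap σ J J' hJ (qmapInv σ J J' hJ w) = w := by
  obtain ⟨y, rfl⟩ := Ideal.Quotient.mk_surjective w
  simp

lemma qmap_ksmul (c : k) (w : R ⧸ J) :
    qmap σ J J' hJ (c • w) = c • qmap σ J J' hJ w := by
  obtain ⟨x, rfl⟩ := Ideal.Quotient.mk_surjective w
  have h1 : c • (Ideal.Quotient.mk J x) = Ideal.Quotient.mk J (c • x) :=
    (Submodule.Quotient.mk_smul _ c x).symm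
  have h2 : c • (Ideal.Quotient.mk J' (σ x)) = Ideal.Quotient.mk J' (c • σ x) :=
    (Submodule.Quotient.mk_smul _ c _).symm
  rw [h1, qmap_mk, qmap_mk, h2, map_smul]

lemma qmapInv_ksmul (c : k) (w : R' ⧸ J') :
    qmapInv σ J J' hJ (c • w) = c • qmapInv σ J J' hJ w := by
  obtain ⟨y, rfl⟩ := Ideal.Quotient.mk_surjective w
  have h1 : c • (Ideal.Quotient.mk J' y) = Ideal.Quotient.mk J' (c • y) :=
    (Submodule.Quotient.mk_smul _ c y).symm
  have h2 : c • (Ideal.Quotient.mk J (σ.symm y)) = Ideal.Quotient.mk J (c • σ.symm y) :=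
    (Submodule.Quotient.mk_smul _ c _).symm
  rw [h1, qmapInv_mk, qmapInv_mk, h2, map_smul]

include hJ in
lemma mem_of_mem' (y : (J' : Submodule R' R')) : σ.symm (y : R') ∈ J :=
  (hJ _).mpr (by rw [AlgEquiv.apply_symm_apply]; exact y.2)

include hJ in
lemma mem_of_mem (x : (J : Submodule R R)) : σ (x : R) ∈ J' := (hJ _).mp x.2

noncomputable def homQuotFwd
    (f : (J : Submodule R R) →ₗ[R] R ⧸ J) :
    (J' : Submodule R' R') →ₗ[R'] R' ⧸ J' where
  toFun y := qmap σ J J' hJ (f ⟨σ.symm (y : R'), mem_of_mem' σ J J' hJ y⟩)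
  map_add' y z := by
    have h : (⟨σ.symm ((y + z : (J' : Submodule R' R')) : R'), mem_of_mem' σ J J' hJ (y + z)⟩ :
        (J : Submodule R R)) = ⟨σ.symm (y : R'), mem_of_mem' σ J J' hJ y⟩ +
          ⟨σ.symm (z : R'), mem_of_mem' σ J J' hJ z⟩ := by
      apply Subtype.ext
      simp
    show qmap σ J J' hJ (f ⟨σ.symm ((y + z : (J' : Submodule R' R')) : R'),
        mem_of_mem' σ J J' hJ (y + z)⟩) = _
    rw [h, map_add, map_add]
  map_smul' r y := by
    have h : (⟨σ.symm ((r • y : (J' : Submodule R' R')) : R'), mem_of_mem' σ J J' hJ (r • y)⟩ :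
        (J : Submodule R R)) = σ.symm r • ⟨σ.symm (y : R'), mem_of_mem' σ J J' hJ y⟩ := by
      apply Subtype.ext
      have : ((r • y : (J' : Submodule R' R')) : R') = r * (y : R') := rfl
      simp [this]
    show qmap σ J J' hJ (f ⟨σ.symm ((r • y : (J' : Submodule R' R')) : R'),
        mem_of_mem' σ J J' hJ (r • y)⟩) = r • _
    rw [h, map_smul, smul_mk', map_mul, qmap_mk, AlgEquiv.apply_symm_apply, smul_mk']

noncomputable def homQuotBwd
    (f : (J' : Submodule R' R') →ₗ[R'] R' ⧸ J') :
    (J : Submodule R R) →ₗ[R] R ⧸ J where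
  toFun x := qmapInv σ J J' hJ (f ⟨σ (x : R), mem_of_mem σ J J' hJ x⟩)
  map_add' y z := by
    have h : (⟨σ ((y + z : (J : Submodule R R)) : R), mem_of_mem σ J J' hJ (y + z)⟩ :
        (J' : Submodule R' R')) = ⟨σ (y : R), mem_of_mem σ J J' hJ y⟩ +
          ⟨σ (z : R), mem_of_mem σ J J' hJ z⟩ := by
      apply Subtype.ext
      simp
    show qmapInv σ J J' hJ (f ⟨σ ((y + z : (J : Submodule R R)) : R),
        mem_of_mem σ J J' hJ (y + z)⟩) = _
    rw [h, map_add, map_add]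
  map_smul' r y := by
    have h : (⟨σ ((r • y : (J : Submodule R R)) : R), mem_of_mem σ J J' hJ (r • y)⟩ :
        (J' : Submodule R' R')) = σ r • ⟨σ (y : R), mem_of_mem σ J J' hJ y⟩ := by
      apply Subtype.ext
      have : ((r • y : (J : Submodule R R)) : R) = r * (y : R) := rfl
      simp [this]
    show qmapInv σ J J' hJ (f ⟨σ ((r • y : (J : Submodule R R)) : R),
        mem_of_mem σ J J' hJ (r • y)⟩) = r • _
    rw [h, map_smul, smul_mk', map_mul, qmapInv_mk, AlgEquiv.symm_apply_apply, smul_mk']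

noncomputable def homQuotCongr :
    ((J : Submodule R R) →ₗ[R] R ⧸ J) ≃ₗ[k] ((J' : Submodule R' R') →ₗ[R'] R' ⧸ J') := by
  refine LinearEquiv.ofLinear
    ⟨⟨homQuotFwd σ J J' hJ, fun f₁ f₂ => ?_⟩, fun c f => ?_⟩
    ⟨⟨homQuotBwd σ J J' hJ, fun f₁ f₂ => ?_⟩, fun c f => ?_⟩ ?_ ?_
  · apply LinearMap.ext; intro y
    show qmap σ J J' hJ ((f₁ + f₂) _) = _
    rw [LinearMap.add_apply, map_add]
    rfl
  · apply LinearMap.ext; intro y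
    show qmap σ J J' hJ ((c • f) _) = _
    rw [LinearMap.smul_apply, qmap_ksmul]
    rfl
  · apply LinearMap.ext; intro x
    show qmapInv σ J J' hJ ((f₁ + f₂) _) = _
    rw [LinearMap.add_apply, map_add]
    rfl
  · apply LinearMap.ext; intro x
    show qmapInv σ J J' hJ ((c • f) _) = _
    rw [LinearMap.smul_apply, qmapInv_ksmul]
    rfl
  · apply LinearMap.ext; intro f
    apply LinearMap.ext; intro y
    show qmap σ J J' hJ (qmapInv σ J J' hJ (f ⟨σ (σ.symm (y : R')), _⟩)) = f y
    rw [qmap_qmapInv]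
    congr 1
    apply Subtype.ext
    simp
  · apply LinearMap.ext; intro f
    apply LinearMap.ext; intro x
    show qmapInv σ J J' hJ (qmap σ J J' hJ (f ⟨σ.symm (σ (x : R)), _⟩)) = f x
    rw [qmapInv_qmap]
    congr 1
    apply Subtype.ext
    simp

end Congr

variable {k : Type*} [CommRing k] {N N' : ℕ}

noncomputable def swapE : MvPolynomial (Fin N') (MvPolynomial (Fin N) k) ≃ₐ[k]
    MvPolynomial (Fin N) (MvPolynomial (Fin N') k) :=
  (sumAlgEquiv k (Fin N') (Fin N)).symm.trans
    ((renameEquiv k (Equiv.sumComm (Fin N') (Fin N))).trans (sumAlgEquiv k (Fin N) (Fin N')))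

lemma mySymmApp (p : MvPolynomial (Fin N') (MvPolynomial (Fin N) k)) :
    (sumAlgEquiv k (Fin N') (Fin N)).symm p = iterToSum k (Fin N') (Fin N) p := by
  have h : (sumAlgEquiv k (Fin N') (Fin N)).symm.toAlgHom.toRingHom = iterToSum k (Fin N') (Fin N) := by
    apply MvPolynomial.ringHom_ext'
    · apply MvPolynomial.ringHom_ext
      · intro a; simp [sumAlgEquiv_symm_C_C, iterToSum_C_C]
      · intro i; simp [sumAlgEquiv_symm_C_X, iterToSum_C_X]
    · intro i; simp [sumAlgEquiv_symm_X, iterToSum_X]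
  exact congrArg (fun f : _ →+* _ => f p) h

lemma myApp (p : MvPolynomial (Fin N ⊕ Fin N') k) :
    sumAlgEquiv k (Fin N) (Fin N') p = sumToIter k (Fin N) (Fin N') p := by
  have h : (sumAlgEquiv k (Fin N) (Fin N')).toAlgHom.toRingHom = sumToIter k (Fin N) (Fin N') := by
    apply MvPolynomial.ringHom_ext
    · intro a; simp [sumAlgEquiv_C_inl, sumToIter_C]
    · intro i
      cases i with
      | inl i => simp [sumAlgEquiv_X_inl, sumToIter_Xl]
      | inr i => simp [sumAlgEquiv_X_inr, sumToIter_Xr]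
  exact congrArg (fun f : _ →+* _ => f p) h

lemma swapE_X (j : Fin N') : (swapE (k := k) (N := N) (X j)) = C (X j) := by
  simp [swapE, mySymmApp, myApp, MvPolynomial.rename_C, MvPolynomial.rename_X, iterToSum_X, sumToIter_Xr]
lemma swapE_C_X (i : Fin N) : (swapE (k := k) (N' := N') (C (X i))) = X i := by
  simp [swapE, mySymmApp, myApp, MvPolynomial.rename_C, MvPolynomial.rename_X, iterToSum_C_X, sumToIter_Xl]
lemma swapE_C_C (c : k) : (swapE (k := k) (N := N) (N' := N') (C (C c))) = C (C c) := by
  simp [swapE, mySymmApp, myApp, MvPolynomial.rename_C, MvPolynomial.rename_X, iterToSum_C_C, sumToIter_C]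


lemma key_finrank {k S : Type*} [Field k] [CommRing S] [Algebra k S] [IsNoetherianRing S]
    (I : Ideal S) [Module.Finite k (S ⧸ I)] {m : ℕ} (g : Fin m → S) :
    Module.finrank k ((Kdl I g : Submodule (MvPolynomial (Fin m) S) (MvPolynomial (Fin m) S))
      →ₗ[MvPolynomial (Fin m) S] MvPolynomial (Fin m) S ⧸ Kdl I g) =
    Module.finrank k ((I : Submodule S S) →ₗ[S] S ⧸ I) + m * Module.finrank k (S ⧸ I) := by
  haveI fd1 : Module.Finite k ((I : Submodule S S) →ₗ[S] S ⧸ I) := fd_hom I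
  rw [LinearEquiv.finrank_eq (keyEquiv (k := k) (I := I) (g := g)), Module.finrank_prod]
  congr 1
  rw [Module.finrank_pi_fintype, Finset.sum_const, Finset.card_univ, Fintype.card_fin,
    smul_eq_mul]

end Stmt13Aux

open Stmt13Aux

/-- Let `X` be a zero-dimensional scheme of degree `d` with two embeddings `X ⊆ ℙᴺ` and
`X ⊆ ℙ^{N'}`.  Then `h⁰(X, N_{X|ℙᴺ}) - dN = h⁰(X, N_{X|ℙ^{N'}}) - dN'`.  Since `X` is
zero-dimensional (affine), the two embeddings are given by ideals `I ⊆ k[x₁,…,x_N]` and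
`I' ⊆ k[x₁,…,x_{N'}]` with isomorphic quotients, and
`h⁰(X, N_{X|ℙᴹ}) = dim_k Hom(I/I², S/I)`. -/
theorem stmt_13 (k : Type*) [Field k] [IsAlgClosed k] [CharZero k] (N N' d : ℕ)
    (I : Ideal (MvPolynomial (Fin N) k)) (I' : Ideal (MvPolynomial (Fin N') k))
    [FiniteDimensional k (MvPolynomial (Fin N) k ⧸ I)]
    (hiso : Nonempty ((MvPolynomial (Fin N) k ⧸ I) ≃ₐ[k] (MvPolynomial (Fin N') k ⧸ I')))
    (hd : Module.finrank k (MvPolynomial (Fin N) k ⧸ I) = d) :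
    (Module.finrank k
        (conormalMod I →ₗ[MvPolynomial (Fin N) k] (MvPolynomial (Fin N) k ⧸ I)) : ℤ) -
      d * N =
    (Module.finrank k
        (conormalMod I' →ₗ[MvPolynomial (Fin N') k] (MvPolynomial (Fin N') k ⧸ I')) : ℤ) -
      d * N' := by
  classical
  obtain ⟨α⟩ := hiso
  haveI fd' : FiniteDimensional k (MvPolynomial (Fin N') k ⧸ I') :=
    Module.Finite.equiv α.toLinearEquiv
  have hd' : Module.finrank k (MvPolynomial (Fin N') k ⧸ I') = d := by
    rw [← hd]
    exact α.toLinearEquiv.finrank_eq.symm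
  have hgex : ∀ j : Fin N', ∃ s, Ideal.Quotient.mk I s = α.symm (Ideal.Quotient.mk I' (X j)) :=
    fun j => Ideal.Quotient.mk_surjective _
  choose g hg using hgex
  have hgex' : ∀ i : Fin N, ∃ s, Ideal.Quotient.mk I' s = α (Ideal.Quotient.mk I (X i)) :=
    fun i => Ideal.Quotient.mk_surjective _
  choose g' hg' using hgex'
  have hcomm : ∀ x : MvPolynomial (Fin N') (MvPolynomial (Fin N) k),
      α (Ideal.Quotient.mk I (aeval g x)) =
        Ideal.Quotient.mk I' (aeval g' (swapE (k := k) (N := N) (N' := N') x)) := by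
    have hbase : ∀ s : MvPolynomial (Fin N) k,
        α (Ideal.Quotient.mk I s) = Ideal.Quotient.mk I' (aeval g' (swapE (k := k) (N := N) (N' := N') (C s))) := by
      intro s
      induction s using MvPolynomial.induction_on with
      | C c =>
          rw [swapE_C_C, aeval_C, Algebra.algebraMap_self_apply]
          have h1 : (Ideal.Quotient.mk I) (C c) =
              algebraMap k (MvPolynomial (Fin N) k ⧸ I) c := by
            rw [IsScalarTower.algebraMap_apply k (MvPolynomial (Fin N) k)
              (MvPolynomial (Fin N) k ⧸ I), Ideal.Quotient.algebraMap_eq,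
              MvPolynomial.algebraMap_eq]
          have h2 : (Ideal.Quotient.mk I') (C c) =
              algebraMap k (MvPolynomial (Fin N') k ⧸ I') c := by
            rw [IsScalarTower.algebraMap_apply k (MvPolynomial (Fin N') k)
              (MvPolynomial (Fin N') k ⧸ I'), Ideal.Quotient.algebraMap_eq,
              MvPolynomial.algebraMap_eq]
          rw [h1, h2, AlgEquiv.commutes]
      | add p q hp hq =>
          simp only [map_add, hp, hq]
      | mul_X p i hp =>
          simp only [map_mul, swapE_C_X, aeval_X, hp]
          rw [← hg' i]
    intro x
    induction x using MvPolynomial.induction_on with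
    | C s => rw [aeval_C, Algebra.algebraMap_self_apply]; exact hbase s
    | add p q hp hq => simp only [map_add, hp, hq]
    | mul_X p j hp =>
        simp only [map_mul, aeval_X, swapE_X, hp]
        rw [aeval_C, Algebra.algebraMap_self_apply, hg j, AlgEquiv.apply_symm_apply]
  have hmem : ∀ x, x ∈ Kdl I g ↔ swapE (k := k) (N := N) (N' := N') x ∈ Kdl I' g' := by
    intro x
    rw [mem_Kdl, mem_Kdl]
    constructor
    · intro h
      have h1 : α (Ideal.Quotient.mk I (aeval g x)) = 0 := by
        rw [Ideal.Quotient.eq_zero_iff_mem.mpr h, map_zero]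
      rw [hcomm x] at h1
      exact Ideal.Quotient.eq_zero_iff_mem.mp h1
    · intro h
      have h1 : Ideal.Quotient.mk I' (aeval g' (swapE (k := k) (N := N) (N' := N') x)) = 0 :=
        Ideal.Quotient.eq_zero_iff_mem.mpr h
      rw [← hcomm x] at h1
      have h2 : Ideal.Quotient.mk I (aeval g x) = 0 := by
        have h3 := congrArg α.symm h1
        simpa using h3
      exact Ideal.Quotient.eq_zero_iff_mem.mp h2
  have e1 := key_finrank (k := k) I g
  have e2 := key_finrank (k := k) I' g'
  have e3 := LinearEquiv.finrank_eq
    (homQuotCongr (swapE (k := k) (N := N) (N' := N')) (Kdl I g) (Kdl I' g') hmem)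
  have c1 := LinearEquiv.finrank_eq (conormalHomEquiv (k := k) I)
  have c2 := LinearEquiv.finrank_eq (conormalHomEquiv (k := k) I')
  rw [c1, c2]
  rw [hd] at e1
  rw [hd'] at e2
  have key : Module.finrank k ((I : Submodule (MvPolynomial (Fin N) k) (MvPolynomial (Fin N) k))
        →ₗ[MvPolynomial (Fin N) k] MvPolynomial (Fin N) k ⧸ I) + N' * d =
      Module.finrank k ((I' : Submodule (MvPolynomial (Fin N') k) (MvPolynomial (Fin N') k))
        →ₗ[MvPolynomial (Fin N') k] MvPolynomial (Fin N') k ⧸ I') + N * d :=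
    (e1.symm.trans e3).trans e2
  have keyZ : (Module.finrank k ((I : Submodule (MvPolynomial (Fin N) k) (MvPolynomial (Fin N) k))
        →ₗ[MvPolynomial (Fin N) k] MvPolynomial (Fin N) k ⧸ I) : ℤ) + N' * d =
      (Module.finrank k ((I' : Submodule (MvPolynomial (Fin N') k) (MvPolynomial (Fin N') k))
        →ₗ[MvPolynomial (Fin N') k] MvPolynomial (Fin N') k ⧸ I') : ℤ) + N * d := by
    exact_mod_cast key
  linarith
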